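/- Unitary-type orthogonality: with ζ^I and ζ^J two d-tuples of distinct n-th roots of (-1)^{d+1}, Σ_{λ ∈ Sh(d,c)} S_λ(ζ^I)·conj(S_λ(ζ^J)) = δ_{I,J} · n^d / |Vand(ζ^I)|^2. -/

import Mathlib

noncomputable section
open scoped Classical

/-- Complete homogeneous symmetric polynomial of degree `m` in `d` variables. -/
def Hpoly (d m : ℕ) (z : Fin d → ℂ) : ℂ :=
  ∑ α ∈ Finset.Nat.antidiagonalTuple d m, ∏ i, z i ^ α i

/-- `H_k` for integer index `k` (zero for negative `k`). -/
def HZ (d : ℕ) (z : Fin d → ℂ) (k : ℤ) : ℂ :=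
  if 0 ≤ k then Hpoly d k.toNat z else 0

/-- Schur polynomial via the Jacobi–Trudi determinant `det(H_{λ_i - i + j})`. -/
def schur (d : ℕ) (lam : Fin d → ℕ) (z : Fin d → ℂ) : ℂ :=
  Matrix.det (Matrix.of fun i j : Fin d => HZ d z ((lam i : ℤ) + j - i))

/-- The partitions fitting in a `d × c` box, as weakly decreasing functions. -/
def box (d c : ℕ) : Finset (Fin d → Fin (c + 1)) :=
  Finset.univ.filter fun lam => ∀ i j : Fin d, i ≤ j → lam j ≤ lam i

/-- Poincaré dual partition `PD(λ) = (c - λ_d, …, c - λ_1)`. -/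
def PD (d c : ℕ) (lam : Fin d → ℕ) : Fin d → ℕ := fun i => c - lam i.rev

/-- Squared modulus of the Vandermonde determinant of a `d`-tuple. -/
def vandSq (d : ℕ) (z : Fin d → ℂ) : ℝ :=
  ‖∏ k : Fin d, ∏ j ∈ Finset.univ.filter (fun j : Fin d => k < j), (z k - z j)‖ ^ 2

namespace Stmt10Aux

/-- complete homogeneous symmetric function of a list, ℤ-indexed. -/
def hh : List ℂ → ℤ → ℂ
  | [] => fun k => if k = 0 then 1 else 0
  | x :: L => fun k =>
      if 0 ≤ k then ∑ t ∈ Finset.range (k.toNat + 1), x ^ t * hh L (k - t) else 0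

/-- elementary symmetric function of a list, ℤ-indexed. -/
def ee : List ℂ → ℤ → ℂ
  | [] => fun k => if k = 0 then 1 else 0
  | x :: L => fun k => ee L k + x * ee L (k - 1)

lemma hh_neg {L : List ℂ} {k : ℤ} (hk : k < 0) : hh L k = 0 := by
  cases L with
  | nil => simp [hh]; omega
  | cons x L => simp [hh]; omega

lemma ee_neg {L : List ℂ} {k : ℤ} (hk : k < 0) : ee L k = 0 := by
  induction L generalizing k with
  | nil => simp [ee]; omega
  | cons x L ih => simp [ee, ih hk, ih (by omega : k - 1 < 0)]

lemma hh_zero (L : List ℂ) : hh L 0 = 1 := by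
  induction L with
  | nil => simp [hh]
  | cons x L ih => simp [hh, ih]

lemma ee_zero (L : List ℂ) : ee L 0 = 1 := by
  induction L with
  | nil => simp [ee]
  | cons x L ih =>
      show ee L 0 + x * ee L (0 - 1) = 1
      rw [ih, ee_neg (by norm_num : (0:ℤ) - 1 < 0)]
      ring

lemma ee_of_length_lt {L : List ℂ} {k : ℤ} (hk : (L.length : ℤ) < k) : ee L k = 0 := by
  induction L generalizing k with
  | nil => simp at hk; simp [ee]; omega
  | cons x L ih =>
      simp only [List.length_cons] at hk
      push_cast at hk
      simp [ee, ih (by omega : (L.length : ℤ) < k), ih (by omega : (L.length : ℤ) < k - 1)]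

/-- extended form of the defining sum for `hh` on a cons. -/
lemma hh_cons' (x : ℂ) (L : List ℂ) (k : ℤ) (N : ℕ) (hN : k.toNat + 1 ≤ N) :
    hh (x :: L) k = ∑ t ∈ Finset.range N, x ^ t * hh L (k - t) := by
  rcases le_or_gt 0 k with hk | hk
  · rw [show hh (x :: L) k = ∑ t ∈ Finset.range (k.toNat + 1), x ^ t * hh L (k - t) from
      by simp [hh, hk]]
    apply Finset.sum_subset (Finset.range_subset_range.2 hN)
    intro t _ ht
    simp only [Finset.mem_range, not_lt] at ht
    rw [hh_neg (by omega), mul_zero]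
  · rw [show hh (x :: L) k = 0 from by simp [hh]; omega]
    rw [Finset.sum_eq_zero]
    intro t _
    rw [hh_neg (by omega), mul_zero]

/-- the basic recursion for `hh`, valid for all `k`. -/
lemma hh_cons_rec (x : ℂ) (L : List ℂ) (k : ℤ) :
    hh (x :: L) k = hh L k + x * hh (x :: L) (k - 1) := by
  rcases lt_or_ge k 0 with hk | hk
  · rw [hh_neg hk, hh_neg hk, hh_neg (by omega), mul_zero, add_zero]
  rcases eq_or_lt_of_le hk with hk0 | hkpos
  · rw [← hk0, hh_zero, hh_zero, hh_neg (by omega), mul_zero, add_zero]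
  have h1 : k.toNat = (k - 1).toNat + 1 := by omega
  rw [hh_cons' x L k (k.toNat + 1) le_rfl]
  rw [h1, Finset.sum_range_succ']
  rw [hh_cons' x L (k - 1) ((k - 1).toNat + 1) le_rfl, Finset.mul_sum]
  rw [add_comm]
  congr 1
  · simp
  · apply Finset.sum_congr rfl
    intro t _
    have hcast : k - ((t : ℤ) + 1) = k - 1 - t := by ring
    push_cast
    rw [hcast]
    ring

lemma hh_swap (x y : ℂ) (L : List ℂ) (k : ℤ) : hh (x :: y :: L) k = hh (y :: x :: L) k := by
  rcases lt_or_ge k 0 with hk | hk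
  · rw [hh_neg hk, hh_neg hk]
  have key : ∀ a b : ℂ, hh (a :: b :: L) k =
      ∑ t ∈ Finset.range (k.toNat + 1), ∑ s ∈ Finset.range (k.toNat + 1),
        a ^ t * (b ^ s * hh L (k - t - s)) := by
    intro a b
    rw [hh_cons' a (b :: L) k (k.toNat + 1) le_rfl]
    apply Finset.sum_congr rfl
    intro t _
    rw [hh_cons' b L (k - t) (k.toNat + 1) (by omega), Finset.mul_sum]
  rw [key, key, Finset.sum_comm]
  apply Finset.sum_congr rfl; intro t _
  apply Finset.sum_congr rfl; intro s _
  have : k - t - s = k - s - t := by omega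
  rw [this]; ring

lemma ee_swap (x y : ℂ) (L : List ℂ) (k : ℤ) : ee (x :: y :: L) k = ee (y :: x :: L) k := by
  simp only [ee]
  have : k - 1 - 1 = k - 2 := by omega
  ring_nf

lemma hh_perm {L L' : List ℂ} (h : L.Perm L') : hh L = hh L' := by
  induction h with
  | nil => rfl
  | cons x _ ih => funext k; rcases lt_or_ge k 0 with hk | hk
                   · rw [hh_neg hk, hh_neg hk]
                   · rw [hh_cons' x _ k (k.toNat + 1) le_rfl, hh_cons' x _ k (k.toNat + 1) le_rfl]
                     simp [ih]
  | swap x y L => funext k; exact hh_swap y x L k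
  | trans _ _ ih1 ih2 => rw [ih1, ih2]

lemma ee_perm {L L' : List ℂ} (h : L.Perm L') : ee L = ee L' := by
  induction h with
  | nil => rfl
  | cons x _ ih => funext k; simp [ee, ih]
  | swap x y L => funext k; exact ee_swap y x L k
  | trans _ _ ih1 ih2 => rw [ih1, ih2]

/-- the orthogonality of `e` and `h` on the same alphabet. -/
lemma ee_hh_orth (L : List ℂ) (k : ℤ) :
    ∑ b ∈ Finset.range (L.length + 1), (-1 : ℂ) ^ b * ee L b * hh L (k - b) =
      if k = 0 then 1 else 0 := by
  induction L generalizing k with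
  | nil =>
      simp [ee_zero, hh]
  | cons x L ih =>
      simp only [List.length_cons]
      have expand : ∀ b : ℕ, ee (x :: L) b = ee L b + x * ee L ((b : ℤ) - 1) := fun b => rfl
      calc ∑ b ∈ Finset.range (L.length + 1 + 1), (-1:ℂ)^b * ee (x :: L) b * hh (x :: L) (k - b)
          = ∑ b ∈ Finset.range (L.length + 1 + 1),
              ((-1:ℂ)^b * ee L b * hh L (k - b)
               + x * ((-1:ℂ)^b * ee L b * hh (x :: L) (k - 1 - b))
               + x * ((-1:ℂ)^b * ee L ((b:ℤ) - 1) * hh (x :: L) (k - b))) := by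
            apply Finset.sum_congr rfl
            intro b _
            rw [expand b, hh_cons_rec x L (k - b)]
            have : k - b - 1 = k - 1 - b := by omega
            rw [this]; ring
        _ = (if k = 0 then 1 else 0) := by
            rw [Finset.sum_add_distrib, Finset.sum_add_distrib]
            have e1 : ∑ b ∈ Finset.range (L.length + 1 + 1), (-1:ℂ)^b * ee L b * hh L (k - b)
                = if k = 0 then 1 else 0 := by
              rw [Finset.sum_range_succ, ee_of_length_lt (by push_cast; omega), ← ih k]
              simp
            have e3 : ∑ b ∈ Finset.range (L.length + 1 + 1),
                x * ((-1:ℂ)^b * ee L ((b:ℤ) - 1) * hh (x :: L) (k - b))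
                = - ∑ b ∈ Finset.range (L.length + 1),
                    x * ((-1:ℂ)^b * ee L b * hh (x :: L) (k - 1 - b)) := by
              rw [Finset.sum_range_succ']
              have hz : ee L (((0:ℕ) : ℤ) - 1) = 0 := ee_neg (by norm_num)
              rw [hz]
              rw [← Finset.sum_neg_distrib]
              simp only [mul_zero, zero_mul, mul_one, add_zero]
              apply Finset.sum_congr rfl
              intro b _
              have h1 : ((b + 1 : ℕ) : ℤ) - 1 = (b : ℤ) := by push_cast; ring
              have h2 : k - ((b + 1 : ℕ) : ℤ) = k - 1 - b := by push_cast; ring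
              rw [h1, h2, pow_succ]
              ring
            have e2 : ∑ b ∈ Finset.range (L.length + 1 + 1),
                x * ((-1:ℂ)^b * ee L b * hh (x :: L) (k - 1 - b))
                = ∑ b ∈ Finset.range (L.length + 1),
                    x * ((-1:ℂ)^b * ee L b * hh (x :: L) (k - 1 - b)) := by
              rw [Finset.sum_range_succ, ee_of_length_lt (by push_cast; omega)]
              simp
            rw [e1, e2, e3]
            ring

/-- the key identity: alternating sum of `e` of a reduced alphabet against `h` of the
full alphabet collapses to a power. -/
lemma ee_hh_mixed (L : List ℂ) (x : ℂ) (k : ℤ) :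
    ∑ b ∈ Finset.range (L.length + 1), (-1:ℂ)^b * ee L b * hh (x :: L) (k - b) =
      if 0 ≤ k then x ^ k.toNat else 0 := by
  rcases lt_or_ge k 0 with hk | hk
  · rw [if_neg (by omega)]
    apply Finset.sum_eq_zero
    intro b _
    rw [hh_neg (by omega), mul_zero]
  rw [if_pos hk]
  calc ∑ b ∈ Finset.range (L.length + 1), (-1:ℂ)^b * ee L b * hh (x :: L) (k - b)
      = ∑ b ∈ Finset.range (L.length + 1), ∑ t ∈ Finset.range (k.toNat + 1),
          x ^ t * ((-1:ℂ)^b * ee L b * hh L ((k - t) - b)) := by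
        apply Finset.sum_congr rfl
        intro b _
        rw [hh_cons' x L (k - b) (k.toNat + 1) (by omega), Finset.mul_sum]
        apply Finset.sum_congr rfl
        intro t _
        have : k - (b:ℤ) - t = k - t - b := by ring
        rw [this]; ring
    _ = ∑ t ∈ Finset.range (k.toNat + 1),
          x ^ t * ∑ b ∈ Finset.range (L.length + 1), (-1:ℂ)^b * ee L b * hh L ((k - t) - b) := by
        rw [Finset.sum_comm]
        apply Finset.sum_congr rfl
        intro t _
        rw [Finset.mul_sum]
    _ = ∑ t ∈ Finset.range (k.toNat + 1), x ^ t * (if k - (t:ℤ) = 0 then 1 else 0) := by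
        apply Finset.sum_congr rfl
        intro t _
        rw [ee_hh_orth]
    _ = x ^ k.toNat := by
        rw [Finset.sum_eq_single k.toNat]
        · rw [if_pos (by omega), mul_one]
        · intro t _ ht
          rw [if_neg (by omega), mul_zero]
        · intro h
          exact absurd (Finset.self_mem_range_succ k.toNat) h

lemma Hpoly_succ (d m : ℕ) (z : Fin (d+1) → ℂ) :
    Hpoly (d+1) m z =
      ∑ ij ∈ Finset.HasAntidiagonal.antidiagonal m, z 0 ^ ij.1 * Hpoly d ij.2 (z ∘ Fin.succ) := by
  unfold Hpoly
  simp_rw [Finset.mul_sum]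
  symm
  rw [Finset.sum_sigma']
  symm
  apply Finset.sum_nbij' (j := fun p => Fin.cons p.fst.1 p.snd)
    (i := fun α => ⟨(α 0, ∑ i, α (Fin.succ i)), fun i => α (Fin.succ i)⟩)
  · intro α hα
    simp only [Finset.Nat.mem_antidiagonalTuple] at hα
    simp only [Finset.mem_sigma, Finset.HasAntidiagonal.mem_antidiagonal,
      Finset.Nat.mem_antidiagonalTuple]
    constructor
    · rw [← hα, Fin.sum_univ_succ]
    · trivial
  · intro p hp
    simp only [Finset.mem_sigma, Finset.HasAntidiagonal.mem_antidiagonal,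
      Finset.Nat.mem_antidiagonalTuple] at hp ⊢
    rw [Fin.sum_cons, hp.2, hp.1]
  · intro α hα
    simp only
    exact Fin.cons_self_tail α
  · intro p hp
    simp only [Finset.mem_sigma, Finset.HasAntidiagonal.mem_antidiagonal,
      Finset.Nat.mem_antidiagonalTuple] at hp
    refine Sigma.ext ?_ (heq_of_eq ?_)
    · simp only [Fin.cons_zero]
      ext
      · rfl
      · simp only [Fin.cons_succ]
        exact hp.2
    · funext i
      simp [Fin.cons_succ]
  · intro α hα
    rw [Fin.prod_univ_succ]
    rfl

lemma Hpoly_eq_hh (d m : ℕ) (z : Fin d → ℂ) :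
    Hpoly d m z = hh (List.ofFn z) m := by
  induction d generalizing m with
  | zero =>
      rw [List.ofFn_zero]
      cases m with
      | zero => simp [Hpoly, hh]
      | succ m =>
          have h1 : ((m : ℤ) + 1) ≠ 0 := by omega
          simp [Hpoly, hh, Finset.Nat.antidiagonalTuple_zero_succ, h1]
  | succ d ih =>
      rw [Hpoly_succ, List.ofFn_succ,
        hh_cons' (z 0) (List.ofFn fun i => z i.succ) m (m + 1) (by simp),
        Finset.Nat.sum_antidiagonal_eq_sum_range_succ_mk]
      apply Finset.sum_congr rfl
      intro t ht
      simp only [Finset.mem_range] at ht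
      rw [ih]
      have hc : (((m - t : ℕ)) : ℤ) = (m : ℤ) - t := by omega
      simp only [hc]
      rfl

lemma HZ_eq_hh (d : ℕ) (z : Fin d → ℂ) (k : ℤ) : HZ d z k = hh (List.ofFn z) k := by
  unfold HZ
  rcases le_or_gt 0 k with hk | hk
  · rw [if_pos hk, Hpoly_eq_hh]
    congr 1
    omega
  · rw [if_neg (by omega), hh_neg hk]

/-- `E` matrix whose entries are signed elementary symmetric functions of reduced alphabets. -/
def Emat (d : ℕ) (z : Fin d → ℂ) : Matrix (Fin d) (Fin d) ℂ :=
  Matrix.of fun j j' : Fin d =>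
    (-1:ℂ) ^ (d - 1 - (j:ℕ)) * ee ((List.ofFn z).erase (z j')) ((d - 1 - (j:ℕ) : ℕ) : ℤ)

/-- bialternant-type matrix. -/
def Pmat (d : ℕ) (z : Fin d → ℂ) (lam : Fin d → ℕ) : Matrix (Fin d) (Fin d) ℂ :=
  Matrix.of fun i j : Fin d => z j ^ (lam i + (d - 1 - (i:ℕ)))

lemma JT_mul_E (d : ℕ) (z : Fin d → ℂ) (lam : Fin d → ℕ) :
    (Matrix.of fun i j : Fin d => HZ d z ((lam i : ℤ) + j - i)) * Emat d z
      = Pmat d z lam := by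
  ext i j'
  have hd : 0 < d := i.pos
  simp only [Matrix.mul_apply, Emat, Pmat, Matrix.of_apply]
  set L' : List ℂ := (List.ofFn z).erase (z j') with hL'
  have hmem : z j' ∈ List.ofFn z := by
    rw [List.mem_ofFn]; exact Set.mem_range_self j'
  have hperm : (List.ofFn z).Perm (z j' :: L') := List.perm_cons_erase hmem
  have hlen : L'.length + 1 = d := by
    rw [hL', List.length_erase_add_one hmem, List.length_ofFn]
  have hHZ : ∀ k : ℤ, HZ d z k = hh (z j' :: L') k := by
    intro k; rw [HZ_eq_hh, hh_perm hperm]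
  set m : ℤ := ((lam i + (d - 1 - (i:ℕ)) : ℕ) : ℤ) with hm
  have key : ∀ j : Fin d, (lam i : ℤ) + (j:ℕ) - (i:ℕ)
      = m - ((d - 1 - (j:ℕ) : ℕ) : ℤ) := by
    intro j
    have h1 : (j : ℕ) < d := j.isLt
    have h2 : (i : ℕ) < d := i.isLt
    push_cast [hm]
    omega
  calc ∑ j : Fin d, HZ d z ((lam i : ℤ) + (j:ℕ) - (i:ℕ)) *
          ((-1:ℂ) ^ (d - 1 - (j:ℕ)) * ee L' ((d - 1 - (j:ℕ) : ℕ) : ℤ))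
      = ∑ j : Fin d, (fun b : ℕ =>
          (-1:ℂ) ^ (d - 1 - b) * ee L' ((d - 1 - b : ℕ) : ℤ) * hh (z j' :: L') (m - ((d - 1 - b : ℕ) : ℤ))) (j : ℕ) := by
        apply Finset.sum_congr rfl
        intro j _
        rw [key j, hHZ]
        ring
    _ = ∑ b ∈ Finset.range d, (fun b : ℕ =>
          (-1:ℂ) ^ (d - 1 - b) * ee L' ((d - 1 - b : ℕ) : ℤ) * hh (z j' :: L') (m - ((d - 1 - b : ℕ) : ℤ))) b := by
        exact Fin.sum_univ_eq_sum_range (fun b : ℕ =>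
          (-1:ℂ) ^ (d - 1 - b) * ee L' ((d - 1 - b : ℕ) : ℤ) * hh (z j' :: L') (m - ((d - 1 - b : ℕ) : ℤ))) d
    _ = ∑ b ∈ Finset.range d,
          (-1:ℂ) ^ b * ee L' (b : ℤ) * hh (z j' :: L') (m - (b : ℤ)) := by
        rw [← Finset.sum_range_reflect]
        apply Finset.sum_congr rfl
        intro b hb
        simp only [Finset.mem_range] at hb
        have : d - 1 - (d - 1 - b) = b := by omega
        simp only [this]
    _ = z j' ^ (lam i + (d - 1 - (i:ℕ))) := by
        have hrange : Finset.range d = Finset.range (L'.length + 1) := by rw [hlen]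
        rw [hrange]
        rw [ee_hh_mixed L' (z j') m]
        rw [if_pos (by rw [hm]; positivity)]
        congr 1

lemma det_JT_zero (d : ℕ) (z : Fin d → ℂ) :
    (Matrix.of fun i j : Fin d => HZ d z ((0 : ℤ) + j - i)).det = 1 := by
  rw [Matrix.det_of_upperTriangular]
  · apply Finset.prod_eq_one
    intro i _
    simp only [Matrix.of_apply]
    have : (0 : ℤ) + i - i = 0 := by ring
    rw [this, HZ_eq_hh, hh_zero]
  · intro i j hij
    simp only [Matrix.of_apply]
    rw [HZ_eq_hh, hh_neg]
    simp only [id] at hij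
    have : (j : ℕ) < (i : ℕ) := hij
    omega

/-- The bialternant formula (multiplied through by the Vandermonde-type determinant). -/
lemma schur_mul_V (d : ℕ) (z : Fin d → ℂ) (lam : Fin d → ℕ) :
    schur d lam z * (Pmat d z 0).det = (Pmat d z lam).det := by
  have h1 := congrArg Matrix.det (JT_mul_E d z lam)
  have h0 := congrArg Matrix.det (JT_mul_E d z 0)
  rw [Matrix.det_mul] at h1 h0
  have hz : (Matrix.of fun i j : Fin d => HZ d z (((0 : Fin d → ℕ) i : ℤ) + j - i)).det = 1 := by
    rw [← det_JT_zero d z]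
    congr 1
  rw [hz, one_mul] at h0
  rw [h0] at h1
  unfold schur
  exact h1

def vdet (d : ℕ) (z : Fin d → ℂ) : ℂ := (Matrix.vandermonde z).det

def eps (d : ℕ) : ℂ := ((Equiv.Perm.sign (Fin.revPerm : Equiv.Perm (Fin d)) : ℤ) : ℂ)

lemma eps_mul_self (d : ℕ) : eps d * eps d = 1 := by
  unfold eps
  rw [← Int.cast_mul, ← Units.val_mul, Int.units_mul_self]
  simp

lemma Pmat_zero_det (d : ℕ) (z : Fin d → ℂ) :
    (Pmat d z 0).det = eps d * vdet d z := by
  have h : Pmat d z 0 = ((Matrix.vandermonde z).transpose).submatrix (Fin.revPerm : Equiv.Perm (Fin d)) _root_.id := by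
    ext i j
    simp only [Pmat, Matrix.of_apply, Pi.zero_apply, zero_add, Matrix.submatrix_apply,
      Matrix.transpose_apply, Matrix.vandermonde_apply, id_eq, Fin.revPerm_apply, Fin.val_rev]
    congr 1
    omega
  rw [h, Matrix.det_permute, Matrix.det_transpose]
  rfl

lemma vandSq_eq (d : ℕ) (z : Fin d → ℂ) :
    ((vandSq d z : ℝ) : ℂ) = vdet d z * (starRingEnd ℂ) (vdet d z) := by
  set Q : ℂ := ∏ k : Fin d, ∏ j ∈ Finset.univ.filter (fun j : Fin d => k < j), (z k - z j) with hQ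
  have h1 : ((vandSq d z : ℝ) : ℂ) = Q * (starRingEnd ℂ) Q := by
    rw [vandSq, Complex.sq_norm, ← Complex.mul_conj]
  set u : ℂ := ∏ k : Fin d, ∏ j ∈ Finset.univ.filter (fun j : Fin d => k < j), (-1 : ℂ) with hu
  have hQV : Q = u * vdet d z := by
    rw [vdet, Matrix.det_vandermonde, hQ, hu, ← Finset.prod_mul_distrib]
    apply Finset.prod_congr rfl
    intro k _
    have hIoi : Finset.Ioi k = Finset.univ.filter (fun j : Fin d => k < j) := by
      ext j; simp [Finset.mem_Ioi]
    rw [hIoi, ← Finset.prod_mul_distrib]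
    apply Finset.prod_congr rfl
    intro j _
    ring
  have huu : u * u = 1 := by
    rw [hu, ← Finset.prod_mul_distrib]
    apply Finset.prod_eq_one
    intro k _
    rw [← Finset.prod_mul_distrib]
    apply Finset.prod_eq_one
    intro j _
    ring
  have hcu : (starRingEnd ℂ) u = u := by
    rw [hu, map_prod]
    apply Finset.prod_congr rfl
    intro k _
    rw [map_prod]
    apply Finset.prod_congr rfl
    intro j _
    simp
  rw [h1, hQV, map_mul, hcu]
  calc u * vdet d z * (u * (starRingEnd ℂ) (vdet d z))
      = (u * u) * (vdet d z * (starRingEnd ℂ) (vdet d z)) := by ring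
    _ = vdet d z * (starRingEnd ℂ) (vdet d z) := by rw [huu, one_mul]

lemma vdet_ne_zero {d : ℕ} {z : Fin d → ℂ} (hz : Function.Injective z) : vdet d z ≠ 0 := by
  rw [vdet, Matrix.det_vandermonde_ne_zero_iff]
  exact hz

lemma vdet_comp_perm (d : ℕ) (z : Fin d → ℂ) (e : Equiv.Perm (Fin d)) :
    vdet d (z ∘ e) = ((Equiv.Perm.sign e : ℤ) : ℂ) * vdet d z := by
  have h : Matrix.vandermonde (z ∘ e) = (Matrix.vandermonde z).submatrix e id := by
    ext i j
    simp [Matrix.vandermonde_apply]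
  rw [vdet, h, Matrix.det_permute]
  rfl

/-- strictly decreasing `d`-tuples in `Fin n`. -/
def sdec (d n : ℕ) : Finset (Fin d → Fin n) :=
  Finset.univ.filter fun μ => ∀ i j : Fin d, i < j → μ j < μ i

lemma sdec_bound {d n : ℕ} {μ : Fin d → Fin n} (hμ : ∀ i j : Fin d, i < j → μ j < μ i) :
    ∀ k : ℕ, ∀ i j : Fin d, (j : ℕ) = (i : ℕ) + k → (μ j : ℕ) + k ≤ (μ i : ℕ) := by
  intro k
  induction k with
  | zero =>
      intro i j hij
      have : i = j := Fin.ext (by omega)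
      subst this
      omega
  | succ k ih =>
      intro i j hij
      have hjd : (i : ℕ) + k < d := by have := j.isLt; omega
      set j' : Fin d := ⟨(i : ℕ) + k, hjd⟩ with hj'
      have h1 : (μ j' : ℕ) + k ≤ (μ i : ℕ) := ih i j' rfl
      have h2 : μ j < μ j' := hμ j' j (by rw [Fin.lt_def]; simp [hj']; omega)
      rw [Fin.lt_def] at h2
      omega

lemma sdec_low {d n : ℕ} {μ : Fin d → Fin n} (hμ : ∀ i j : Fin d, i < j → μ j < μ i)
    (i : Fin d) : d - 1 - (i : ℕ) ≤ (μ i : ℕ) := by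
  have hd : 0 < d := i.pos
  have hlast : (⟨d - 1, by omega⟩ : Fin d) = ⟨d - 1, by omega⟩ := rfl
  have := sdec_bound hμ (d - 1 - (i : ℕ)) i ⟨d - 1, by omega⟩ (by simp; omega)
  omega

lemma sdec_high {d n : ℕ} {μ : Fin d → Fin n} (hμ : ∀ i j : Fin d, i < j → μ j < μ i)
    (i : Fin d) : (μ i : ℕ) + (i : ℕ) ≤ n - 1 := by
  have hd : 0 < d := i.pos
  have := sdec_bound hμ (i : ℕ) ⟨0, hd⟩ i (by simp)
  have := (μ (⟨0, hd⟩ : Fin d)).isLt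
  omega

/-- reindexing the sum over partitions in the box as a sum over strictly decreasing tuples. -/
lemma sum_box_eq_sum_sdec (c d n : ℕ) (hn : n = c + d) (G : (Fin d → ℕ) → ℂ) :
    ∑ lam ∈ box d c, G (fun i => (lam i : ℕ) + (d - 1 - (i : ℕ)))
      = ∑ μ ∈ sdec d n, G (fun i => (μ i : ℕ)) := by
  apply Finset.sum_nbij'
    (i := fun lam => fun i : Fin d => (⟨(lam i : ℕ) + (d - 1 - (i : ℕ)), by
        have h1 := (lam i).isLt
        have h2 := i.isLt
        omega⟩ : Fin n))
    (j := fun μ => fun i : Fin d => (⟨min ((μ i : ℕ) - (d - 1 - (i : ℕ))) c, by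
        omega⟩ : Fin (c + 1)))
  · intro lam hlam
    simp only [box, Finset.mem_filter, Finset.mem_univ, true_and] at hlam
    simp only [sdec, Finset.mem_filter, Finset.mem_univ, true_and]
    intro i j hij
    have h1 : (lam j : ℕ) ≤ (lam i : ℕ) := hlam i j (le_of_lt hij)
    rw [Fin.lt_def] at hij ⊢
    have h2 := j.isLt
    simp only
    omega
  · intro μ hμ
    simp only [sdec, Finset.mem_filter, Finset.mem_univ, true_and] at hμ
    simp only [box, Finset.mem_filter, Finset.mem_univ, true_and]
    intro i j hij
    rcases eq_or_lt_of_le hij with h | h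
    · rw [h]
    · have hb := sdec_bound hμ ((j : ℕ) - (i : ℕ)) i j (by omega)
      have hl := sdec_low hμ i
      rw [Fin.le_def] at hij ⊢
      have h2 := j.isLt
      simp only
      omega
  · intro lam hlam
    funext i
    apply Fin.ext
    simp only
    have h := (lam i).isLt
    omega
  · intro μ hμ
    simp only [sdec, Finset.mem_filter, Finset.mem_univ, true_and] at hμ
    funext i
    apply Fin.ext
    simp only
    have hl := sdec_low hμ i
    have hh := sdec_high hμ i
    have h3 := (μ i).isLt
    omega
  · intro lam hlam
    rfl

/-- strictly decreasing tuples with the same image coincide. -/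
lemma sdec_unique {d n : ℕ} {μ μ' : Fin d → Fin n}
    (h1 : ∀ i j : Fin d, i < j → μ j < μ i) (h2 : ∀ i j : Fin d, i < j → μ' j < μ' i)
    (him : Finset.univ.image μ = Finset.univ.image μ') : μ = μ' := by
  have hinj : Function.Injective μ := by
    intro a b hab
    by_contra h
    rcases lt_or_gt_of_ne h with hl | hl
    · exact absurd hab (ne_of_gt (h1 a b hl))
    · exact absurd hab (ne_of_lt (h1 b a hl))
  set s : Finset (Fin n) := Finset.univ.image μ with hs
  have hcard : s.card = d := by
    rw [hs, Finset.card_image_of_injective _ hinj, Finset.card_univ, Fintype.card_fin]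
  have key : ∀ (ν : Fin d → Fin n), (∀ i j : Fin d, i < j → ν j < ν i) →
      Finset.univ.image ν = s → ∀ i : Fin d, ν i = s.orderEmbOfFin hcard i.rev := by
    intro ν hν himν i
    have hmono : StrictMono (fun i : Fin d => ν i.rev) := by
      intro a b hab
      exact hν b.rev a.rev (by rwa [Fin.rev_lt_rev])
    have hmem : ∀ x : Fin d, ν x.rev ∈ s := by
      intro x
      rw [← himν]
      exact Finset.mem_image_of_mem _ (Finset.mem_univ _)
    have := Finset.orderEmbOfFin_unique hcard hmem hmono
    have hi := congrFun this i.rev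
    simpa [Fin.rev_rev] using hi
  funext i
  rw [key μ h1 rfl i, key μ' h2 him.symm i]

/-- every injective tuple factors as a strictly decreasing tuple composed with a permutation. -/
lemma exists_sdec_factor {d n : ℕ} (g : Fin d → Fin n) (hg : Function.Injective g) :
    ∃ (μ : Fin d → Fin n) (σ : Equiv.Perm (Fin d)),
      (∀ i j : Fin d, i < j → μ j < μ i) ∧ μ ∘ σ = g := by
  set s : Finset (Fin n) := Finset.univ.image g with hs
  have hcard : s.card = d := by
    rw [hs, Finset.card_image_of_injective _ hg, Finset.card_univ, Fintype.card_fin]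
  set oi := s.orderIsoOfFin hcard with hoi
  set σ' : Fin d → Fin d := fun i =>
    (oi.symm ⟨g i, by rw [hs]; exact Finset.mem_image_of_mem _ (Finset.mem_univ _)⟩).rev with hσ'
  have hσinj : Function.Injective σ' := by
    intro a b hab
    rw [hσ'] at hab
    simp only at hab
    have h1 := Fin.rev_injective hab
    have h2 := oi.symm.injective h1
    have h3 : g a = g b := congrArg Subtype.val h2
    exact hg h3
  refine ⟨fun i => (oi i.rev : Fin n),
    Equiv.ofBijective σ' ((Finite.injective_iff_bijective).mp hσinj), ?_, ?_⟩
  · intro i j hij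
    have : j.rev < i.rev := by rwa [Fin.rev_lt_rev]
    have h2 : oi j.rev < oi i.rev := oi.strictMono this
    exact h2
  · funext i
    simp only [Function.comp_apply, Equiv.ofBijective_apply, hσ', Fin.rev_rev]
    exact congrArg Subtype.val (oi.apply_symm_apply _)

/-- rewriting a sum over injective tuples as a double sum. -/
lemma sum_inj_eq_sum_sdec_perm {d n : ℕ} (T : (Fin d → Fin n) → ℂ) :
    ∑ g ∈ Finset.univ.filter (fun g : Fin d → Fin n => Function.Injective g), T g
      = ∑ p ∈ (sdec d n) ×ˢ (Finset.univ : Finset (Equiv.Perm (Fin d))), T (p.1 ∘ p.2) := by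
  symm
  apply Finset.sum_bij (i := fun p _ => p.1 ∘ p.2)
  · intro p hp
    simp only [Finset.mem_product, sdec, Finset.mem_filter, Finset.mem_univ, true_and] at hp
    simp only [Finset.mem_filter, Finset.mem_univ, true_and]
    have hinj : Function.Injective p.1 := by
      intro a b hab
      by_contra h
      rcases lt_or_gt_of_ne h with hl | hl
      · exact absurd hab (ne_of_gt (hp.1 a b hl))
      · exact absurd hab (ne_of_lt (hp.1 b a hl))
    exact hinj.comp p.2.injective
  · intro p hp q hq hpq
    simp only [Finset.mem_product, sdec, Finset.mem_filter, Finset.mem_univ, true_and] at hp hq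
    have him : Finset.univ.image p.1 = Finset.univ.image q.1 := by
      have h1 : Finset.univ.image (p.1 ∘ p.2) = Finset.univ.image p.1 := by
        rw [← Finset.image_image]
        congr 1
        exact Finset.image_univ_equiv p.2
      have h2 : Finset.univ.image (q.1 ∘ q.2) = Finset.univ.image q.1 := by
        rw [← Finset.image_image]
        congr 1
        exact Finset.image_univ_equiv q.2
      rw [← h1, ← h2, hpq]
    have hμ : p.1 = q.1 := sdec_unique hp.1 hq.1 him
    have hinj : Function.Injective q.1 := by
      intro a b hab
      by_contra h
      rcases lt_or_gt_of_ne h with hl | hl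
      · exact absurd hab (ne_of_gt (hq.1 a b hl))
      · exact absurd hab (ne_of_lt (hq.1 b a hl))
    have hσ : p.2 = q.2 := by
      apply Equiv.ext
      intro i
      apply hinj
      have := congrFun hpq i
      simp only [Function.comp_apply] at this
      rw [← this, hμ]
    exact Prod.ext hμ hσ
  · intro g hg
    simp only [Finset.mem_filter, Finset.mem_univ, true_and] at hg
    obtain ⟨μ, σ, hμ, hfac⟩ := exists_sdec_factor g hg
    refine ⟨(μ, σ), ?_, hfac⟩
    simp only [Finset.mem_product, sdec, Finset.mem_filter, Finset.mem_univ, true_and]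
    exact ⟨hμ, trivial⟩
  · intro p hp
    rfl

/-- multilinear expansion of the determinant of a sum-of-powers matrix. -/
lemma detM_expand (d n : ℕ) (u v : Fin d → ℂ) :
    (Matrix.of fun i j : Fin d => ∑ m : Fin n, u i ^ (m : ℕ) * v j ^ (m : ℕ)).det
      = ∑ g : Fin d → Fin n,
          (∏ i, u i ^ ((g i : ℕ))) * (Matrix.of fun a b : Fin d => v b ^ ((g a : ℕ))).det := by
  have hM : (Matrix.of fun i j : Fin d => ∑ m : Fin n, u i ^ (m : ℕ) * v j ^ (m : ℕ))
      = fun i => ∑ m : Fin n, u i ^ (m : ℕ) • (fun j => v j ^ (m : ℕ)) := by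
    funext i j
    simp [Matrix.of_apply, Finset.sum_apply]
  rw [Matrix.det, hM]
  rw [show (Matrix.detRowAlternating (fun i => ∑ m : Fin n, u i ^ (m:ℕ) • fun j : Fin d => v j ^ (m:ℕ)) : ℂ)
      = (Matrix.detRowAlternating : (Fin d → ℂ) [⋀^Fin d]→ₗ[ℂ] ℂ).toMultilinearMap
          (fun i => ∑ m : Fin n, u i ^ (m:ℕ) • fun j : Fin d => v j ^ (m:ℕ)) from rfl]
  rw [MultilinearMap.map_sum]
  apply Finset.sum_congr rfl
  intro g _
  rw [MultilinearMap.map_smul_univ]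
  simp only [smul_eq_mul]
  rfl

/-- full Cauchy–Binet style identity. -/
lemma cauchy_binet (d n : ℕ) (u v : Fin d → ℂ) :
    (Matrix.of fun i j : Fin d => ∑ m : Fin n, u i ^ (m : ℕ) * v j ^ (m : ℕ)).det
      = ∑ μ ∈ sdec d n,
          (Matrix.of fun a b : Fin d => u b ^ ((μ a : ℕ))).det *
            (Matrix.of fun a b : Fin d => v b ^ ((μ a : ℕ))).det := by
  rw [detM_expand]
  have h1 : ∑ g : Fin d → Fin n,
        (∏ i, u i ^ ((g i : ℕ))) * (Matrix.of fun a b : Fin d => v b ^ ((g a : ℕ))).det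
      = ∑ g ∈ Finset.univ.filter (fun g : Fin d → Fin n => Function.Injective g),
        (∏ i, u i ^ ((g i : ℕ))) * (Matrix.of fun a b : Fin d => v b ^ ((g a : ℕ))).det := by
    symm
    apply Finset.sum_filter_of_ne
    intro g _ hne
    by_contra hinj
    apply hne
    obtain ⟨a, b, hab, hne'⟩ := Function.not_injective_iff.mp hinj
    have : (Matrix.of fun a b : Fin d => v b ^ ((g a : ℕ))).det = 0 := by
      apply Matrix.det_zero_of_row_eq hne'
      funext y
      simp only [Matrix.of_apply, hab]
    rw [this, mul_zero]
  rw [h1, sum_inj_eq_sum_sdec_perm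
    (fun g => (∏ i, u i ^ ((g i : ℕ))) * (Matrix.of fun a b : Fin d => v b ^ ((g a : ℕ))).det)]
  rw [Finset.sum_product]
  apply Finset.sum_congr rfl
  intro μ hμ
  calc ∑ σ : Equiv.Perm (Fin d),
        (∏ i, u i ^ (((μ ∘ σ) i : ℕ))) * (Matrix.of fun a b : Fin d => v b ^ (((μ ∘ σ) a : ℕ))).det
      = ∑ σ : Equiv.Perm (Fin d),
        ((Equiv.Perm.sign σ : ℤ) : ℂ) * (∏ i, u i ^ ((μ (σ i) : ℕ))) *
          (Matrix.of fun a b : Fin d => v b ^ ((μ a : ℕ))).det := by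
        apply Finset.sum_congr rfl
        intro σ _
        simp only [Function.comp_apply]
        have hsub : (Matrix.of fun a b : Fin d => v b ^ ((μ (σ a) : ℕ)))
            = (Matrix.of fun a b : Fin d => v b ^ ((μ a : ℕ))).submatrix σ _root_.id := by
          ext a b
          simp [Matrix.submatrix_apply]
        rw [hsub, Matrix.det_permute]
        ring
    _ = (Matrix.of fun a b : Fin d => u b ^ ((μ a : ℕ))).det *
          (Matrix.of fun a b : Fin d => v b ^ ((μ a : ℕ))).det := by
        rw [← Finset.sum_mul]
        congr 1
        rw [Matrix.det_apply]
        apply Finset.sum_congr rfl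
        intro σ _
        simp only [Units.smul_def, zsmul_eq_mul, Matrix.of_apply]

/-- evaluation of the Gram matrix entries via geometric sums. -/
lemma M_eval {c d n : ℕ} (hn : n = c + d) (hd : 0 < d) (z w : Fin d → ℂ)
    (hz : ∀ k, z k ^ n = (-1 : ℂ) ^ (d + 1)) (hw : ∀ k, w k ^ n = (-1 : ℂ) ^ (d + 1)) :
    (Matrix.of fun i j : Fin d => ∑ m : Fin n, z i ^ (m : ℕ) * ((starRingEnd ℂ) (w j)) ^ (m : ℕ))
      = (n : ℂ) • (Matrix.of fun i j : Fin d => if z i = w j then 1 else 0) := by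
  have hn1 : 1 ≤ n := by omega
  ext i j
  simp only [Matrix.of_apply, Matrix.smul_apply, smul_eq_mul]
  have habs : ∀ u : Fin d → ℂ, (∀ k, u k ^ n = (-1 : ℂ) ^ (d + 1)) →
      ∀ k, Complex.normSq (u k) = 1 := by
    intro u hu k
    have h1 : ‖u k‖ ^ n = 1 := by
      rw [← norm_pow, hu k, norm_pow, norm_neg, norm_one, one_pow]
    have h2 : ‖u k‖ = 1 := by
      by_contra hne
      rcases lt_or_gt_of_ne hne with hlt | hgt
      · have := pow_lt_one₀ (norm_nonneg (u k)) hlt (by omega : n ≠ 0)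
        rw [h1] at this; exact lt_irrefl _ this
      · have := one_lt_pow₀ hgt (by omega : n ≠ 0)
        rw [h1] at this; exact lt_irrefl _ this
    rw [← Complex.sq_norm, h2, one_pow]
  set q : ℂ := z i * (starRingEnd ℂ) (w j) with hq
  have hsum : ∑ m : Fin n, z i ^ (m : ℕ) * ((starRingEnd ℂ) (w j)) ^ (m : ℕ)
      = ∑ m ∈ Finset.range n, q ^ m := by
    rw [Fin.sum_univ_eq_sum_range (fun m => z i ^ m * ((starRingEnd ℂ) (w j)) ^ m) n]
    apply Finset.sum_congr rfl
    intro m _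
    rw [hq, mul_pow]
  rw [hsum]
  by_cases hcase : z i = w j
  · rw [if_pos hcase]
    have : q = 1 := by
      rw [hq, hcase, Complex.mul_conj, habs w hw j, Complex.ofReal_one]
    rw [this]
    simp
  · rw [if_neg hcase, mul_zero]
    have hqn : q ^ n = 1 := by
      rw [hq, mul_pow, hz i, ← map_pow, hw j]
      have : (starRingEnd ℂ) ((-1 : ℂ) ^ (d + 1)) = (-1 : ℂ) ^ (d + 1) := by
        rw [map_pow]; simp
      rw [this, ← mul_pow]
      simp
  -- conclude geometric sum is zero
    have hq1 : q ≠ 1 := by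
      intro h1
      apply hcase
      have hnorm : Complex.normSq (w j) = 1 := habs w hw j
      have h2 : z i * (starRingEnd ℂ) (w j) * w j = w j := by rw [← hq, h1, one_mul]
      have h3 : (starRingEnd ℂ) (w j) * w j = 1 := by
        rw [mul_comm, Complex.mul_conj, hnorm, Complex.ofReal_one]
      calc z i = z i * ((starRingEnd ℂ) (w j) * w j) := by rw [h3, mul_one]
        _ = w j := by rw [← mul_assoc, h2]
    have := geom_sum_mul q n
    rw [hqn, sub_self] at this
    rcases mul_eq_zero.mp this with h | h
    · exact h
    · exact absurd (sub_eq_zero.mp h) hq1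

lemma delta_det_of_range_eq {d : ℕ} {z w : Fin d → ℂ} (hzinj : Function.Injective z)
    (hwinj : Function.Injective w) (hr : Set.range z = Set.range w) :
    ∃ e : Equiv.Perm (Fin d), w = z ∘ e ∧
      (Matrix.of fun i j : Fin d => if z i = w j then (1:ℂ) else 0).det
        = ((Equiv.Perm.sign e : ℤ) : ℂ) := by
  have hsurj : ∀ j, ∃ i, z i = w j := by
    intro j
    have : w j ∈ Set.range z := by rw [hr]; exact Set.mem_range_self j
    exact this
  set e' : Fin d → Fin d := fun j => (hsurj j).choose with he'
  have he'spec : ∀ j, z (e' j) = w j := fun j => (hsurj j).choose_spec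
  have he'inj : Function.Injective e' := by
    intro a b hab
    apply hwinj
    rw [← he'spec a, ← he'spec b, hab]
  refine ⟨Equiv.ofBijective e' ((Finite.injective_iff_bijective).mp he'inj), ?_, ?_⟩
  · funext j
    rw [← he'spec j]; rfl
  · have hmat : (Matrix.of fun i j : Fin d => if z i = w j then (1:ℂ) else 0)
        = (1 : Matrix (Fin d) (Fin d) ℂ).submatrix _root_.id
            (Equiv.ofBijective e' ((Finite.injective_iff_bijective).mp he'inj)) := by
      ext i j
      simp only [Matrix.of_apply, Matrix.submatrix_apply, id_eq, Matrix.one_apply,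
        Equiv.ofBijective_apply, ← he'spec j, hzinj.eq_iff]
    rw [hmat, Matrix.det_permute', Matrix.det_one, mul_one]

end Stmt10Aux

open Stmt10Aux in
/-- Unitary-type orthogonality: for `d`-tuples `z = ζ^I`, `w = ζ^J` of distinct
`n`-th roots of `(-1)^{d+1}`,
`∑_{λ ∈ Sh(d,c)} S_λ(ζ^I)·conj(S_λ(ζ^J)) = δ_{I,J}·n^d/|Vand(ζ^I)|²`. -/
theorem stmt10 (c d n : ℕ) (hn : n = c + d) (z w : Fin d → ℂ)
    (hz : ∀ k, z k ^ n = (-1 : ℂ) ^ (d + 1)) (hzinj : Function.Injective z)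
    (hw : ∀ k, w k ^ n = (-1 : ℂ) ^ (d + 1)) (hwinj : Function.Injective w) :
    ∑ lam ∈ box d c,
        schur d (fun i => (lam i : ℕ)) z *
          (starRingEnd ℂ) (schur d (fun i => (lam i : ℕ)) w) =
      if Set.range z = Set.range w then (n : ℂ) ^ d / (vandSq d z : ℂ) else 0 := by
  rcases Nat.eq_zero_or_pos d with hd0 | hdpos
  · subst hd0
    have hbox : box 0 c = Finset.univ := by
      apply Finset.filter_true_of_mem
      intro lam _
      intro i j _
      exact absurd i.isLt (by omega)
    have hcard : (Finset.univ : Finset (Fin 0 → Fin (c+1))).card = 1 := by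
      simp [Finset.card_univ]
    have hrz : Set.range z = Set.range w := by
      rw [Set.range_eq_empty z, Set.range_eq_empty w]
    rw [hbox, if_pos hrz]
    have hs : ∀ (lam : Fin 0 → Fin (c+1)) (u : Fin 0 → ℂ),
        schur 0 (fun i => (lam i : ℕ)) u = 1 := by
      intro lam u
      exact Matrix.det_fin_zero
    have hvand : vandSq 0 z = 1 := by
      rw [vandSq]
      rw [Finset.prod_of_isEmpty (ι := Fin 0)]
      simp
    calc ∑ lam : Fin 0 → Fin (c+1), schur 0 (fun i => (lam i : ℕ)) z *
            (starRingEnd ℂ) (schur 0 (fun i => (lam i : ℕ)) w)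
        = ∑ _lam : Fin 0 → Fin (c+1), 1 := by
          apply Finset.sum_congr rfl
          intro lam _
          rw [hs lam z, hs lam w, map_one, mul_one]
      _ = 1 := by rw [Finset.sum_const, hcard, one_smul]
      _ = (n : ℂ) ^ 0 / ((vandSq 0 z : ℝ) : ℂ) := by
          rw [hvand]
          norm_num
  · have hn1 : 1 ≤ n := by omega
    set A := ∑ lam ∈ box d c,
        schur d (fun i => (lam i : ℕ)) z *
          (starRingEnd ℂ) (schur d (fun i => (lam i : ℕ)) w) with hA
    set Vz := (Pmat d z 0).det with hVz
    set Vw := (Pmat d w 0).det with hVw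
    set Dp := (Matrix.of fun i j : Fin d => if z i = w j then (1:ℂ) else 0).det with hDp
    have key : A * (Vz * (starRingEnd ℂ) Vw) = (n:ℂ)^d * Dp := by
      rw [hA, Finset.sum_mul]
      calc ∑ lam ∈ box d c, schur d (fun i => (lam i : ℕ)) z *
              (starRingEnd ℂ) (schur d (fun i => (lam i : ℕ)) w) * (Vz * (starRingEnd ℂ) Vw)
          = ∑ lam ∈ box d c, (Pmat d z (fun i => (lam i : ℕ))).det *
              (Matrix.of fun a b : Fin d =>
                ((starRingEnd ℂ) (w b)) ^ (((lam a : ℕ)) + (d - 1 - (a:ℕ)))).det := by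
            apply Finset.sum_congr rfl
            intro lam _
            have h1 := schur_mul_V d z (fun i => (lam i : ℕ))
            have h2 := schur_mul_V d w (fun i => (lam i : ℕ))
            rw [← hVz] at h1
            rw [← hVw] at h2
            have h3 : (starRingEnd ℂ) ((Pmat d w (fun i => (lam i : ℕ))).det)
                = (Matrix.of fun a b : Fin d =>
                    ((starRingEnd ℂ) (w b)) ^ (((lam a : ℕ)) + (d - 1 - (a:ℕ)))).det := by
              rw [RingHom.map_det]
              congr 1
              ext a b
              simp [Matrix.map_apply, Pmat, map_pow]
            rw [← h3, ← h1, ← h2, map_mul]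
            ring
        _ = ∑ μ ∈ sdec d n,
              (Matrix.of fun a b : Fin d => z b ^ ((μ a : ℕ))).det *
                (Matrix.of fun a b : Fin d => ((starRingEnd ℂ) (w b)) ^ ((μ a : ℕ))).det :=
            sum_box_eq_sum_sdec c d n hn (fun ν =>
              (Matrix.of fun a b : Fin d => z b ^ (ν a)).det *
                (Matrix.of fun a b : Fin d => ((starRingEnd ℂ) (w b)) ^ (ν a)).det)
        _ = (Matrix.of fun i j : Fin d =>
              ∑ m : Fin n, z i ^ (m:ℕ) * ((starRingEnd ℂ) (w j)) ^ (m:ℕ)).det :=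
            (cauchy_binet d n z (fun j => (starRingEnd ℂ) (w j))).symm
        _ = ((n:ℂ) • (Matrix.of fun i j : Fin d => if z i = w j then (1:ℂ) else 0)).det := by
            rw [M_eval hn hdpos z w hz hw]
        _ = (n:ℂ)^d * Dp := by
            rw [Matrix.det_smul, hDp, Fintype.card_fin]
    have hVzval : Vz = eps d * vdet d z := by rw [hVz]; exact Pmat_zero_det d z
    have hVwval : Vw = eps d * vdet d w := by rw [hVw]; exact Pmat_zero_det d w
    have hconj_eps : (starRingEnd ℂ) (eps d) = eps d := by unfold eps; simp
    have hvdz := vdet_ne_zero hzinj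
    have hvdw := vdet_ne_zero hwinj
    have hvandne : ((vandSq d z : ℝ) : ℂ) ≠ 0 := by
      rw [vandSq_eq]
      exact mul_ne_zero hvdz ((map_ne_zero_iff _ (RingHom.injective _)).mpr hvdz)
    have hepsne : eps d ≠ 0 := by
      intro h
      have := eps_mul_self d
      rw [h, mul_zero] at this
      exact zero_ne_one this
    by_cases hr : Set.range z = Set.range w
    · rw [if_pos hr]
      obtain ⟨e, hwe, hdet⟩ := delta_det_of_range_eq hzinj hwinj hr
      set s : ℂ := ((Equiv.Perm.sign e : ℤ) : ℂ) with hsgn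
      have hs2 : s * s = 1 := by
        rw [hsgn, ← Int.cast_mul, ← Units.val_mul, Int.units_mul_self]
        simp
      have hsne : s ≠ 0 := by
        intro h
        rw [h, mul_zero] at hs2
        exact zero_ne_one hs2
      have hconj_s : (starRingEnd ℂ) s = s := by rw [hsgn]; simp
      have hvw : vdet d w = s * vdet d z := by
        rw [hwe]
        exact vdet_comp_perm d z e
      have hVprod : Vz * (starRingEnd ℂ) Vw = s * ((vandSq d z : ℝ) : ℂ) := by
        rw [hVzval, hVwval, hvw, map_mul, map_mul, hconj_eps, hconj_s, vandSq_eq]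
        linear_combination (s * vdet d z * ((starRingEnd ℂ) (vdet d z))) * eps_mul_self d
      have hDs : Dp = s := by rw [hDp, hdet]
      rw [hVprod, hDs] at key
      rw [eq_div_iff hvandne]
      apply mul_right_cancel₀ hsne
      calc A * ((vandSq d z : ℝ) : ℂ) * s = A * (s * ((vandSq d z : ℝ) : ℂ)) := by ring
        _ = (n:ℂ)^d * s := key
    · rw [if_neg hr]
      have hcases : (∃ i, ∀ j, z i ≠ w j) ∨ ∃ j, ∀ i, z i ≠ w j := by
        by_contra hc
        push_neg at hc
        obtain ⟨h1, h2⟩ := hc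
        apply hr
        apply Set.Subset.antisymm
        · rintro x ⟨i, rfl⟩
          obtain ⟨j, hj⟩ := h1 i
          exact ⟨j, hj.symm⟩
        · rintro x ⟨j, rfl⟩
          obtain ⟨i, hi⟩ := h2 j
          exact ⟨i, hi⟩
      have hD0 : Dp = 0 := by
        rw [hDp]
        rcases hcases with ⟨i, hi⟩ | ⟨j, hj⟩
        · apply Matrix.det_eq_zero_of_row_eq_zero i
          intro j
          simp only [Matrix.of_apply]
          rw [if_neg (hi j)]
        · apply Matrix.det_eq_zero_of_column_eq_zero j
          intro i
          simp only [Matrix.of_apply]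
          rw [if_neg (hj i)]
      rw [hD0, mul_zero] at key
      have hVne : Vz * (starRingEnd ℂ) Vw ≠ 0 := by
        apply mul_ne_zero
        · rw [hVzval]; exact mul_ne_zero hepsne hvdz
        · apply (map_ne_zero_iff _ (RingHom.injective _)).mpr
          rw [hVwval]; exact mul_ne_zero hepsne hvdw
      exact (mul_eq_zero.mp key).resolve_right hVne
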